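/- arXiv:2211.05619 — 3 statements merged into one kernel-verified Lean document; each statement's English description precedes it below -/
import Mathlib

section
/- Let G be a connected graph with minimum degree δ. If G contains two adjacent vertices each of degree δ, then the generalized 3-connectivity satisfies κ₃(G) ≤ δ − 1. -/
open SimpleGraph

/-- A signed permutation of `{1,…,n}`: a sequence of integers whose absolute
values form a permutation of `{1,…,n}`. -/
def SignedPerm (n : ℕ) : Type :=
  {x : Fin n → ℤ // (∀ i, 1 ≤ |x i| ∧ |x i| ≤ (n : ℤ)) ∧
    Function.Injective (fun i => |x i|)}

/-- `prefixRevRel n i x y` means `y = x^i`, the `i`-th signed prefix reversal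
of `x` (for `1 ≤ i ≤ n`). -/
def prefixRevRel (n i : ℕ) (x y : SignedPerm n) : Prop :=
  ∃ _h1 : 1 ≤ i, ∃ _h2 : i ≤ n, ∀ j : Fin n,
    (∀ _hj : (j : ℕ) < i, y.val j = - x.val ⟨i - 1 - (j : ℕ), by omega⟩) ∧
    ((i ≤ (j : ℕ)) → y.val j = x.val j)

/-- The burnt pancake graph `BP_n`. -/
def burntPancake (n : ℕ) : SimpleGraph (SignedPerm n) where
  Adj x y := x ≠ y ∧ ∃ i : ℕ, prefixRevRel n i x y ∨ prefixRevRel n i y x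
  symm := by
    constructor
    rintro x y ⟨hne, i, h⟩
    exact ⟨hne.symm, i, h.symm⟩
  loopless := by
    constructor
    rintro x ⟨hne, -⟩
    exact hne rfl

/-- The last entry of a signed permutation; the cluster `BP_n^j` consists of
the vertices with last entry `j`. -/
def lastEntry {n : ℕ} (hn : 0 < n) (x : SignedPerm n) : ℤ :=
  x.val ⟨n - 1, by omega⟩

/-- `y` is the out-neighbour of `x`, i.e. `y = x^n`. -/
def isOutNbr (n : ℕ) (x y : SignedPerm n) : Prop := prefixRevRel n n x y

/-- `T` is a family of `r` pairwise internally edge disjoint `S`-trees in `G`. -/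
def InternallyEdgeDisjointSTrees {V : Type*} (G : SimpleGraph V) (S : Set V)
    {r : ℕ} (T : Fin r → G.Subgraph) : Prop :=
  (∀ i, (T i).coe.IsTree ∧ S ⊆ (T i).verts) ∧
  ∀ i j, i ≠ j → (T i).verts ∩ (T j).verts = S ∧ (T i).edgeSet ∩ (T j).edgeSet = ∅

/-- `κ_G(S)`: the maximum number of pairwise internally edge disjoint `S`-trees. -/
noncomputable def treeConn {V : Type*} (G : SimpleGraph V) (S : Set V) : ℕ :=
  sSup {r : ℕ | ∃ T : Fin r → G.Subgraph, InternallyEdgeDisjointSTrees G S T}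

/-- The generalized `3`-connectivity `κ₃(G)`. -/
noncomputable def gconn3 {V : Type*} (G : SimpleGraph V) : ℕ :=
  sInf (treeConn G '' {S : Set V | S.ncard = 3})

/-- The connectivity `κ(G)`: the minimum cardinality of a set of vertices whose
deletion disconnects the graph or leaves fewer than two vertices. -/
noncomputable def vconn {V : Type*} (G : SimpleGraph V) : ℕ :=
  sInf {k : ℕ | ∃ U : Set V, U.Finite ∧ U.ncard = k ∧
    (¬ (G.induce Uᶜ).Connected ∨ Uᶜ.Subsingleton)}

set_option linter.unusedVariables false


lemma exists_boundary_adj {V : Type*} {G : SimpleGraph V} (H : G.Subgraph)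
    (P : V → Prop) {a b : H.verts} (p : H.coe.Walk a b)
    (ha : ¬ P a.val) (hb : P b.val) :
    ∃ x y : V, H.Adj x y ∧ ¬ P x ∧ P y := by
  induction p with
  | nil => exact absurd hb ha
  | @cons s t c h q ih =>
    by_cases hc : P t.val
    · exact ⟨s.val, t.val, h, ha, hc⟩
    · exact ih hc hb

lemma exists_adj_to {V : Type*} {G : SimpleGraph V} (H : G.Subgraph)
    (hconn : H.coe.Connected) {a x : V}
    (ha : a ∈ H.verts) (hx : x ∈ H.verts) (hne : x ≠ a) :
    ∃ c, c ≠ a ∧ H.Adj c a := by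
  obtain ⟨p⟩ := hconn ⟨x, hx⟩ ⟨a, ha⟩
  obtain ⟨c, y, hcy, hc, hy⟩ := exists_boundary_adj H (fun z => z = a) p hne rfl
  subst hy
  exact ⟨c, hc, hcy⟩

lemma two_incident_edges {V : Type*} {G : SimpleGraph V} (H : G.Subgraph)
    (hconn : H.coe.Connected) {u v w : V}
    (hu : u ∈ H.verts) (hv : v ∈ H.verts) (hw : w ∈ H.verts)
    (huv : u ≠ v) (hwu : w ≠ u) (hwv : w ≠ v) :
    ∃ e1 e2 : Sym2 V, e1 ∈ H.edgeSet ∧ e2 ∈ H.edgeSet ∧ e1 ≠ e2 ∧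
      (u ∈ e1 ∨ v ∈ e1) ∧ (u ∈ e2 ∨ v ∈ e2) := by
  obtain ⟨p⟩ := hconn ⟨w, hw⟩ ⟨u, hu⟩
  obtain ⟨x, y, hxy, hx, hy⟩ := exists_boundary_adj H (fun z => z = u ∨ z = v) p
    (by rintro (h | h); exacts [hwu h, hwv h]) (Or.inl rfl)
  push_neg at hx
  obtain ⟨hxu, hxv⟩ := hx
  rcases hy with h | h <;> rw [h] at hxy
  · -- y = u, e1 = s(x,u); get edge at v
    obtain ⟨c, hc, hca⟩ := exists_adj_to H hconn hv hxy.fst_mem hxv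
    refine ⟨s(x, u), s(c, v), Subgraph.mem_edgeSet.mpr hxy, Subgraph.mem_edgeSet.mpr hca, ?_, ?_, ?_⟩
    · intro heq
      have : v ∈ s(x, u) := by rw [heq]; exact Sym2.mem_mk_right _ _
      rw [Sym2.mem_iff] at this
      rcases this with h | h
      · exact hxv h.symm
      · exact huv h.symm
    · exact Or.inl (Sym2.mem_mk_right _ _)
    · exact Or.inr (Sym2.mem_mk_right _ _)
  · -- y = v, e1 = s(x,v); get edge at u
    obtain ⟨c, hc, hca⟩ := exists_adj_to H hconn hu hxy.fst_mem hxu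
    refine ⟨s(x, v), s(c, u), Subgraph.mem_edgeSet.mpr hxy, Subgraph.mem_edgeSet.mpr hca, ?_, ?_, ?_⟩
    · intro heq
      have : u ∈ s(x, v) := by rw [heq]; exact Sym2.mem_mk_right _ _
      rw [Sym2.mem_iff] at this
      rcases this with h | h
      · exact hxu h.symm
      · exact huv h
    · exact Or.inr (Sym2.mem_mk_right _ _)
    · exact Or.inl (Sym2.mem_mk_right _ _)


/-- If a connected graph `G` has two adjacent vertices of minimum degree `δ`,
then `κ₃(G) ≤ δ - 1`. -/
theorem gconn3_le_minDegree_sub_one {V : Type*} [Fintype V]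
    (G : SimpleGraph V) [DecidableRel G.Adj] (hG : G.Connected)
    (u v : V) (huv : G.Adj u v)
    (hu : G.degree u = G.minDegree) (hv : G.degree v = G.minDegree) :
    gconn3 G ≤ G.minDegree - 1 := by
  classical
  by_cases hcard : ∃ w : V, w ≠ u ∧ w ≠ v
  case neg =>
    push_neg at hcard
    have hempty : {S : Set V | S.ncard = 3} = ∅ := by
      rw [Set.eq_empty_iff_forall_notMem]
      intro S hS
      rw [Set.mem_setOf_eq, Set.ncard_eq_three] at hS
      obtain ⟨a, b, c, hab, hac, hbc, -⟩ := hS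
      have ha := or_iff_not_imp_left.mpr (hcard a)
      have hb := or_iff_not_imp_left.mpr (hcard b)
      have hc := or_iff_not_imp_left.mpr (hcard c)
      rcases ha with rfl | rfl <;> rcases hb with rfl | rfl <;>
        rcases hc with rfl | rfl <;> simp_all
    simp [gconn3, hempty]
  case pos =>
  obtain ⟨w, hwu, hwv⟩ := hcard
  have hne : u ≠ v := huv.ne
  have hδ1 : 1 ≤ G.minDegree := by
    rw [← hu]
    exact (G.degree_pos_iff_exists_adj u).mpr ⟨v, huv⟩
  set S : Set V := {u, v, w} with hSdef
  have hS3 : S.ncard = 3 :=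
    Set.ncard_eq_three.mpr ⟨u, v, w, hne, fun h => hwu h.symm, fun h => hwv h.symm, rfl⟩
  have key : treeConn G S ≤ G.minDegree - 1 := by
    apply csSup_le
    · exact ⟨0, Fin.elim0, fun i => i.elim0, fun i j _ => i.elim0⟩
    rintro r ⟨T, htree, hdisj⟩
    -- incidence finsets
    set Iu := G.incidenceFinset u with hIu
    set Iv := G.incidenceFinset v with hIv
    have hinter : Iu ∩ Iv = {s(u, v)} := by
      ext e
      simp only [hIu, hIv, Finset.mem_inter, mem_incidenceFinset, Finset.mem_singleton]
      rw [← Set.mem_inter_iff, G.incidenceSet_inter_incidenceSet_of_adj huv,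
        Set.mem_singleton_iff]
    have hIcard : (Iu ∪ Iv).card = G.degree u + G.degree v - 1 := by
      have h1 := Finset.card_union_add_card_inter Iu Iv
      rw [hinter, Finset.card_singleton] at h1
      have h2 : Iu.card = G.degree u := G.card_incidenceFinset_eq_degree u
      have h3 : Iv.card = G.degree v := G.card_incidenceFinset_eq_degree v
      omega
    set F : Fin r → Finset (Sym2 V) :=
      fun i => (Iu ∪ Iv).filter (fun e => e ∈ (T i).edgeSet) with hF
    have hmemF : ∀ i e, e ∈ F i ↔ (e ∈ (T i).edgeSet ∧ (u ∈ e ∨ v ∈ e)) := by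
      intro i e
      simp only [hF, Finset.mem_filter, Finset.mem_union, hIu, hIv, mem_incidenceFinset]
      constructor
      · rintro ⟨h1 | h1, h2⟩
        · exact ⟨h2, Or.inl h1.2⟩
        · exact ⟨h2, Or.inr h1.2⟩
      · rintro ⟨h1, h2 | h2⟩
        · exact ⟨Or.inl ⟨(T i).edgeSet_subset h1, h2⟩, h1⟩
        · exact ⟨Or.inr ⟨(T i).edgeSet_subset h1, h2⟩, h1⟩
    have hF2 : ∀ i, 2 ≤ (F i).card := by
      intro i
      obtain ⟨htr, hSsub⟩ := htree i
      have huV : u ∈ (T i).verts := hSsub (by simp [hSdef])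
      have hvV : v ∈ (T i).verts := hSsub (by simp [hSdef])
      have hwV : w ∈ (T i).verts := hSsub (by simp [hSdef])
      obtain ⟨e1, e2, he1, he2, hne12, hi1, hi2⟩ :=
        two_incident_edges (T i) htr.isConnected huV hvV hwV hne hwu hwv
      exact Finset.one_lt_card.mpr
        ⟨e1, (hmemF i e1).mpr ⟨he1, hi1⟩, e2, (hmemF i e2).mpr ⟨he2, hi2⟩, hne12⟩
    have hdisjF : ∀ i ∈ Finset.univ, ∀ j ∈ Finset.univ, i ≠ j → Disjoint (F i) (F j) := by
      intro i _ j _ hij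
      rw [Finset.disjoint_left]
      intro e hei hej
      have h1 := ((hmemF i e).mp hei).1
      have h2 := ((hmemF j e).mp hej).1
      have := (hdisj i j hij).2
      have : e ∈ (T i).edgeSet ∩ (T j).edgeSet := ⟨h1, h2⟩
      simp_all
    have h2r : 2 * r ≤ (Iu ∪ Iv).card := by
      calc 2 * r = ∑ _i : Fin r, 2 := by
            simp [Finset.sum_const, mul_comm]
        _ ≤ ∑ i, (F i).card := Finset.sum_le_sum (fun i _ => hF2 i)
        _ = (Finset.univ.biUnion F).card := (Finset.card_biUnion hdisjF).symm
        _ ≤ (Iu ∪ Iv).card := Finset.card_le_card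
            (Finset.biUnion_subset.mpr fun i _ => Finset.filter_subset _ _)
    rw [hIcard, hu, hv] at h2r
    omega
  calc gconn3 G ≤ treeConn G S := Nat.sInf_le ⟨S, hS3, rfl⟩
    _ ≤ G.minDegree - 1 := key
end

section
/- For every integer n ≥ 3, the subgraph of the godan graph EA_n induced by the alternating group A_n is isomorphic to the alternating group network AN_n, and the subgraph of EA_n induced by the set S_n ∖ A_n of odd permutations is also isomorphic to AN_n. -/
open SimpleGraph Equiv

/-- The (undirected) Cayley graph of a group with connection set `Ω`. -/
def cayley {G : Type*} [Group G] (Ω : Set G) : SimpleGraph G where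
  Adj u v := u ≠ v ∧ ∃ s ∈ Ω, u = v * s ∨ v = u * s
  symm := by
    constructor
    rintro u v ⟨hne, s, hs, h⟩
    exact ⟨hne.symm, s, hs, h.symm⟩
  loopless := by constructor; rintro u ⟨hne, -⟩; exact hne rfl

/-- The Cayley graph on a subgroup `H`, with connection set `Ω` given as a set
of elements of the ambient group. -/
def subCayley {G : Type*} [Group G] (H : Subgroup G) (Ω : Set G) :
    SimpleGraph H where
  Adj u v := u ≠ v ∧ ∃ s ∈ Ω, (u : G) = v * s ∨ (v : G) = u * s
  symm := by
    constructor
    rintro u v ⟨hne, s, hs, h⟩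
    exact ⟨hne.symm, s, hs, h.symm⟩
  loopless := by constructor; rintro u ⟨hne, -⟩; exact hne rfl

/-- The 3-cycle `(1 2 3)` (on `{1,…,n}`, written 0-indexed on `Fin n`). -/
def c123 (n : ℕ) (hn : 3 ≤ n) : Equiv.Perm (Fin n) :=
  Equiv.swap ⟨0, by omega⟩ ⟨2, by omega⟩ * Equiv.swap ⟨0, by omega⟩ ⟨1, by omega⟩

/-- The connection set `Ω = {(123), (132)} ∪ {(12)(3i) : 4 ≤ i ≤ n}` of the
alternating group network. -/
def anGens (n : ℕ) (hn : 3 ≤ n) : Set (Equiv.Perm (Fin n)) :=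
  {c123 n hn, (c123 n hn)⁻¹} ∪
  {s | ∃ i : ℕ, ∃ _h1 : 4 ≤ i, ∃ _h2 : i ≤ n,
    s = Equiv.swap ⟨0, by omega⟩ ⟨1, by omega⟩ *
        Equiv.swap ⟨2, by omega⟩ ⟨i - 1, by omega⟩}

/-- The connection set `Ω* = {(12), (123), (132)} ∪ {(12)(3i) : 4 ≤ i ≤ n}` of
the godan graph. -/
def godanGens (n : ℕ) (hn : 3 ≤ n) : Set (Equiv.Perm (Fin n)) :=
  {Equiv.swap ⟨0, by omega⟩ ⟨1, by omega⟩} ∪ anGens n hn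

/-- The alternating group network `AN_n = Cay(A_n, Ω)`. -/
def altNetwork (n : ℕ) (hn : 3 ≤ n) : SimpleGraph (alternatingGroup (Fin n)) :=
  subCayley (alternatingGroup (Fin n)) (anGens n hn)

/-- The godan graph `EA_n = Cay(S_n, Ω*)`. -/
def godan (n : ℕ) (hn : 3 ≤ n) : SimpleGraph (Equiv.Perm (Fin n)) :=
  cayley (godanGens n hn)

lemma sign_swap01 (n : ℕ) (hn : 3 ≤ n) :
    Equiv.Perm.sign (Equiv.swap (⟨0, by omega⟩ : Fin n) ⟨1, by omega⟩) = -1 :=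
  Equiv.Perm.sign_swap (by intro h; simp [Fin.ext_iff] at h)

lemma anGens_even (n : ℕ) (hn : 3 ≤ n) :
    ∀ s ∈ anGens n hn, Equiv.Perm.sign s = 1 := by
  rintro s hs
  rcases hs with (h | h) | ⟨i, h1, h2, rfl⟩
  · subst h
    simp [c123, Equiv.Perm.sign_swap, Fin.ext_iff]
  · rw [Set.mem_singleton_iff] at h
    subst h
    simp [c123, Equiv.Perm.sign_swap, Fin.ext_iff]
  · rw [map_mul, Equiv.Perm.sign_swap (by intro h; simp [Fin.ext_iff] at h),
      Equiv.Perm.sign_swap (by intro h; simp [Fin.ext_iff] at h; omega)]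
    decide

/-- For `n ≥ 3`, the subgraph of the godan graph `EA_n` induced by the
alternating group `A_n` is isomorphic to `AN_n`, and so is the subgraph
induced by the odd permutations `S_n ∖ A_n`. -/
theorem godan_induced_iso_altNetwork (n : ℕ) (hn : 3 ≤ n) :
    Nonempty ((godan n hn).induce
        ((alternatingGroup (Fin n) : Set (Equiv.Perm (Fin n)))) ≃g
      altNetwork n hn) ∧
    Nonempty ((godan n hn).induce
        ((alternatingGroup (Fin n) : Set (Equiv.Perm (Fin n)))ᶜ) ≃g
      altNetwork n hn) := by
  set t : Equiv.Perm (Fin n) := Equiv.swap ⟨0, by omega⟩ ⟨1, by omega⟩ with ht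
  have hts : Equiv.Perm.sign t = -1 := sign_swap01 n hn
  have htt : t * t = 1 := Equiv.swap_mul_self _ _
  have hkey : ∀ u v : Equiv.Perm (Fin n),
      Equiv.Perm.sign u = Equiv.Perm.sign v →
      ((godan n hn).Adj u v ↔
        u ≠ v ∧ ∃ s ∈ anGens n hn, u = v * s ∨ v = u * s) := by
    intro u v hp
    constructor
    · rintro ⟨hne, s, hs, h⟩
      rcases hs with hs | hs
      · exfalso
        rw [Set.mem_singleton_iff] at hs
        subst hs
        rcases h with h | h
        · have := congrArg Equiv.Perm.sign h
          rw [map_mul, hts, hp] at this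
          rcases Int.units_eq_one_or (Equiv.Perm.sign v) with h1 | h1 <;>
            rw [h1] at this <;> exact absurd this (by decide)
        · have := congrArg Equiv.Perm.sign h
          rw [map_mul, hts, hp] at this
          rcases Int.units_eq_one_or (Equiv.Perm.sign v) with h1 | h1 <;>
            rw [h1] at this <;> exact absurd this (by decide)
      · exact ⟨hne, s, hs, h⟩
    · rintro ⟨hne, s, hs, h⟩
      exact ⟨hne, s, Or.inr hs, h⟩
  constructor
  · refine ⟨{ toEquiv := Equiv.refl _, map_rel_iff' := ?_ }⟩
    intro u v
    show (altNetwork n hn).Adj ⟨u.1, u.2⟩ ⟨v.1, v.2⟩ ↔ (godan n hn).Adj u.1 v.1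
    have hp : Equiv.Perm.sign u.1 = Equiv.Perm.sign v.1 := by
      have hu := Equiv.Perm.mem_alternatingGroup.mp u.2
      have hv := Equiv.Perm.mem_alternatingGroup.mp v.2
      rw [hu, hv]
    rw [hkey u.1 v.1 hp]
    constructor
    · rintro ⟨hne, s, hs, h⟩
      exact ⟨fun hh => hne (Subtype.ext hh), s, hs, h⟩
    · rintro ⟨hne, s, hs, h⟩
      exact ⟨fun hh => hne (congrArg Subtype.val hh), s, hs, h⟩
  · have hmem : ∀ u : Equiv.Perm (Fin n),
        u ∈ ((alternatingGroup (Fin n) : Set (Equiv.Perm (Fin n))))ᶜ →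
        Equiv.Perm.sign u = -1 := by
      intro u hu
      rcases Int.units_eq_one_or (Equiv.Perm.sign u) with h1 | h1
      · exact absurd (Equiv.Perm.mem_alternatingGroup.mpr h1) hu
      · exact h1
    refine ⟨{ toEquiv := ?_, map_rel_iff' := ?_ }⟩
    · refine ⟨fun x => ⟨t * x.1, ?_⟩, fun y => ⟨t * y.1, ?_⟩, ?_, ?_⟩
      · rw [Equiv.Perm.mem_alternatingGroup, map_mul, hts, hmem x.1 x.2]
        decide
      · intro hy
        have hy1 := Equiv.Perm.mem_alternatingGroup.mp hy
        rw [map_mul, hts, Equiv.Perm.mem_alternatingGroup.mp y.2] at hy1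
        exact absurd hy1 (by decide)
      · intro x
        exact Subtype.ext (show t * (t * x.1) = x.1 by
          rw [← mul_assoc, htt, one_mul])
      · intro y
        exact Subtype.ext (show t * (t * y.1) = y.1 by
          rw [← mul_assoc, htt, one_mul])
    · intro u v
      show (altNetwork n hn).Adj ⟨t * u.1, _⟩ ⟨t * v.1, _⟩ ↔
        (godan n hn).Adj u.1 v.1
      have hp : Equiv.Perm.sign u.1 = Equiv.Perm.sign v.1 := by
        rw [hmem u.1 u.2, hmem v.1 v.2]
      rw [hkey u.1 v.1 hp]
      constructor
      · rintro ⟨hne, s, hs, h⟩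
        refine ⟨fun hh => hne (Subtype.ext
          (show t * u.1 = t * v.1 by rw [hh])), s, hs, ?_⟩
        rcases h with h | h
        · have h' : t * u.1 = t * (v.1 * s) := by
            have h2 : t * u.1 = t * v.1 * s := h
            rw [h2, mul_assoc]
          exact Or.inl (mul_left_cancel h')
        · have h' : t * v.1 = t * (u.1 * s) := by
            have h2 : t * v.1 = t * u.1 * s := h
            rw [h2, mul_assoc]
          exact Or.inr (mul_left_cancel h')
      · rintro ⟨hne, s, hs, h⟩
        refine ⟨fun hh => hne ?_, s, hs, ?_⟩
        · have h2 : t * u.1 = t * v.1 := congrArg Subtype.val hh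
          exact mul_left_cancel h2
        · rcases h with h | h
          · exact Or.inl (show t * u.1 = t * v.1 * s by rw [h, mul_assoc])
          · exact Or.inr (show t * v.1 = t * u.1 * s by rw [h, mul_assoc])
end

section
/- For every integer n ≥ 3, the connectivity of the godan graph satisfies κ(EA_n) = n. -/
open SimpleGraph Equiv

namespace Godan
variable {n : ℕ}

section Evals
variable (hn : 3 ≤ n)

lemma fne {a b : ℕ} {ha : a < n} {hb : b < n} (h : a ≠ b) :
    (⟨a, ha⟩ : Fin n) ≠ ⟨b, hb⟩ := by simp [Fin.ext_iff, h]

lemma fne2 (a b : Fin n) (h : (a : ℕ) ≠ (b : ℕ)) : a ≠ b :=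
  fun he => h (congrArg Fin.val he)

lemma fne' {a : ℕ} {ha : a < n} {j : Fin n} (h : (j : ℕ) ≠ a) :
    j ≠ ⟨a, ha⟩ := by simp [Fin.ext_iff, h]

abbrev I0 : Fin n := ⟨0, by omega⟩
abbrev I1 : Fin n := ⟨1, by omega⟩
abbrev I2 : Fin n := ⟨2, by omega⟩

@[simp] lemma I0_val : (I0 hn : ℕ) = 0 := rfl
@[simp] lemma I1_val : (I1 hn : ℕ) = 1 := rfl
@[simp] lemma I2_val : (I2 hn : ℕ) = 2 := rfl

lemma eq_tri (j : Fin n) (hj : (j : ℕ) < 3) :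
    j = I0 hn ∨ j = I1 hn ∨ j = I2 hn := by
  rcases (by omega : (j:ℕ) = 0 ∨ (j:ℕ) = 1 ∨ (j:ℕ) = 2) with h | h | h
  · exact Or.inl (Fin.ext h)
  · exact Or.inr (Or.inl (Fin.ext h))
  · exact Or.inr (Or.inr (Fin.ext h))

/-- the transposition (12) -/
def T : Perm (Fin n) := Equiv.swap (I0 hn) (I1 hn)

lemma T_0 : T hn (I0 hn) = I1 hn := by simp [T, Equiv.swap_apply_def, Fin.ext_iff]
lemma T_1 : T hn (I1 hn) = I0 hn := by simp [T, Equiv.swap_apply_def, Fin.ext_iff]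
lemma T_hi (j : Fin n) (hj : 2 ≤ (j : ℕ)) : T hn j = j := by
  simp only [T, Equiv.swap_apply_def, Fin.ext_iff]
  split_ifs with h1 h2 <;> simp_all <;> omega
lemma T_2 : T hn (I2 hn) = I2 hn := T_hi hn _ (by simp)

def C : Perm (Fin n) := c123 n hn

lemma C_def : C hn = Equiv.swap (I0 hn) (I2 hn) * Equiv.swap (I0 hn) (I1 hn) := rfl

lemma C_0 : C hn (I0 hn) = I1 hn := by
  simp [C_def, Perm.mul_apply, Equiv.swap_apply_def, Fin.ext_iff]
lemma C_1 : C hn (I1 hn) = I2 hn := by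
  simp [C_def, Perm.mul_apply, Equiv.swap_apply_def, Fin.ext_iff]
lemma C_2 : C hn (I2 hn) = I0 hn := by
  simp [C_def, Perm.mul_apply, Equiv.swap_apply_def, Fin.ext_iff]
lemma C_hi (j : Fin n) (hj : 3 ≤ (j : ℕ)) : C hn j = j := by
  simp only [C_def, Perm.mul_apply, Equiv.swap_apply_def, Fin.ext_iff]
  split_ifs with h1 h2 h3 h4 <;> simp_all <;> omega

lemma C3 : C hn * C hn * C hn = 1 := by
  ext j
  rcases lt_or_ge (j : ℕ) 3 with hj | hj
  · rcases eq_tri hn j hj with rfl | rfl | rfl <;>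
      simp [Perm.mul_apply, C_0, C_1, C_2]
  · simp [Perm.mul_apply, C_hi hn _ hj]

lemma Csq_eq_inv : C hn * C hn = (C hn)⁻¹ := eq_inv_of_mul_eq_one_left (C3 hn)

lemma T2 : T hn * T hn = 1 := by
  simp only [T, Equiv.swap_mul_self]

lemma C_ne_one : C hn ≠ 1 := fun h => by
  have := C_0 hn; rw [h] at this; simp [Fin.ext_iff, I0, I1] at this

lemma Csq_ne_one : C hn * C hn ≠ 1 := fun h => by
  have : (C hn * C hn) (I0 hn) = I0 hn := by rw [h]; rfl
  rw [Perm.mul_apply, C_0, C_1] at this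
  simp [Fin.ext_iff, I0, I2] at this

lemma T_ne_one : T hn ≠ 1 := fun h => by
  have := T_0 hn; rw [h] at this; simp [Fin.ext_iff, I0, I1] at this

lemma sign_T : Perm.sign (T hn) = -1 :=
  Perm.sign_swap (by simp [Fin.ext_iff])
lemma sign_C : Perm.sign (C hn) = 1 := by
  rw [C_def, map_mul, Perm.sign_swap (by simp [Fin.ext_iff]),
    Perm.sign_swap (by simp [Fin.ext_iff])]
  decide

end Evals
/-- the generator `(12)(3,p+1)` (0-indexed: swaps positions 2 and p), for `3 ≤ p < n`. -/
def SG {p : ℕ} (h3 : 3 ≤ p) (hp : p < n) : Perm (Fin n) :=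
  Equiv.swap ⟨0, by omega⟩ ⟨1, by omega⟩ * Equiv.swap ⟨2, by omega⟩ ⟨p, hp⟩

section Gens
variable (hn : 3 ≤ n)
variable {p : ℕ} (h3 : 3 ≤ p) (hp : p < n)

lemma SG_mem : SG h3 hp ∈ godanGens n hn :=
  Or.inr (Or.inr ⟨p + 1, by omega, by omega, rfl⟩)

lemma SG_0 : SG h3 hp (I0 hn) = I1 hn := by
  simp only [SG, Perm.mul_apply, Equiv.swap_apply_def, Fin.ext_iff]
  split_ifs <;> simp_all <;> omega

lemma SG_1 : SG h3 hp (I1 hn) = I0 hn := by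
  simp only [SG, Perm.mul_apply, Equiv.swap_apply_def, Fin.ext_iff]
  split_ifs <;> simp_all <;> omega

lemma SG_2 : SG h3 hp (I2 hn) = ⟨p, hp⟩ := by
  simp only [SG, Perm.mul_apply, Equiv.swap_apply_def, Fin.ext_iff]
  split_ifs <;> simp_all <;> omega

lemma SG_p : SG h3 hp ⟨p, hp⟩ = I2 hn := by
  simp only [SG, Perm.mul_apply, Equiv.swap_apply_def, Fin.ext_iff]
  split_ifs <;> simp_all <;> omega

lemma SG_other (j : Fin n) (hj2 : 2 ≤ (j : ℕ)) (hjp : (j : ℕ) ≠ p) (hj2' : (j : ℕ) ≠ 2) :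
    SG h3 hp j = j := by
  simp only [SG, Perm.mul_apply, Equiv.swap_apply_def, Fin.ext_iff]
  split_ifs <;> simp_all <;> omega

lemma SG_sq : SG h3 hp * SG h3 hp = 1 := by
  have hn : 3 ≤ n := by omega
  ext j
  rcases lt_or_ge (j : ℕ) 2 with hj | hj
  · rcases (by omega : (j : ℕ) = 0 ∨ (j : ℕ) = 1) with h | h
    · have : j = I0 hn := Fin.ext h
      subst this
      rw [Perm.mul_apply, SG_0 hn h3 hp, SG_1 hn h3 hp, Perm.one_apply]
    · have : j = I1 hn := Fin.ext h
      subst this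
      rw [Perm.mul_apply, SG_1 hn h3 hp, SG_0 hn h3 hp, Perm.one_apply]
  · rcases eq_or_ne (j : ℕ) 2 with h | h
    · have : j = I2 hn := Fin.ext h
      subst this
      rw [Perm.mul_apply, SG_2 hn h3 hp, SG_p hn h3 hp, Perm.one_apply]
    · rcases eq_or_ne (j : ℕ) p with h' | h'
      · have : j = ⟨p, hp⟩ := Fin.ext h'
        subst this
        rw [Perm.mul_apply, SG_p hn h3 hp, SG_2 hn h3 hp, Perm.one_apply]
      · rw [Perm.mul_apply, SG_other h3 hp j hj h' h, SG_other h3 hp j hj h' h,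
          Perm.one_apply]

lemma SG_ne_one : SG h3 hp ≠ 1 := fun h => by
  have hn : 3 ≤ n := by omega
  have := SG_0 hn h3 hp
  rw [h] at this
  simp [Fin.ext_iff] at this

lemma SG_inv : (SG h3 hp)⁻¹ = SG h3 hp :=
  inv_eq_of_mul_eq_one_right (SG_sq h3 hp)

lemma SG_hi (j : Fin n) (hj : p + 1 ≤ (j : ℕ)) : SG h3 hp j = j :=
  SG_other h3 hp j (by omega) (by omega) (by omega)

lemma T_mem : T hn ∈ godanGens n hn := Or.inl rfl
lemma C_mem : C hn ∈ godanGens n hn := Or.inr (Or.inl (Or.inl rfl))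
lemma Cinv_mem : (C hn)⁻¹ ∈ godanGens n hn := Or.inr (Or.inl (Or.inr rfl))
lemma CC_mem : C hn * C hn ∈ godanGens n hn := by rw [Csq_eq_inv]; exact Cinv_mem hn

lemma gen_ne_one {s : Perm (Fin n)} (hs : s ∈ godanGens n hn) : s ≠ 1 := by
  rcases hs with h | h | h
  · rw [Set.mem_singleton_iff] at h; subst h; exact T_ne_one hn
  · rcases h with h | h
    · subst h; exact C_ne_one hn
    · rw [Set.mem_singleton_iff] at h; subst h
      simp only [ne_eq, inv_eq_one]
      exact C_ne_one hn
  · obtain ⟨i, h1, h2, rfl⟩ := h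
    exact SG_ne_one (p := i - 1) (by omega) (by omega)

lemma gen_inv_mem {s : Perm (Fin n)} (hs : s ∈ godanGens n hn) :
    s⁻¹ ∈ godanGens n hn := by
  rcases hs with h | h | h
  · rw [Set.mem_singleton_iff] at h; subst h
    rw [Equiv.swap_inv]
    exact T_mem hn
  · rcases h with h | h
    · subst h; exact Cinv_mem hn
    · rw [Set.mem_singleton_iff] at h; subst h
      rw [inv_inv]; exact C_mem hn
  · obtain ⟨i, h1, h2, rfl⟩ := h
    show (SG (p := i - 1) (by omega) (by omega : i - 1 < n))⁻¹ ∈ godanGens n hn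
    rw [SG_inv (p := i - 1) (by omega) (by omega)]
    exact SG_mem hn (by omega) (by omega)

lemma adj_mul {s : Perm (Fin n)} (hs : s ∈ godanGens n hn) (v : Perm (Fin n)) :
    (godan n hn).Adj v (v * s) := by
  refine ⟨fun h => gen_ne_one hn hs ?_, s, hs, Or.inr rfl⟩
  exact (left_eq_mul.mp h)

lemma adj_one {w : Perm (Fin n)} (h : (godan n hn).Adj 1 w) : w ∈ godanGens n hn := by
  obtain ⟨-, s, hs, h | h⟩ := h
  · have hw : w = s⁻¹ := by
      have h2 : w * s = 1 := h.symm
      calc w = w * s * s⁻¹ := by group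
        _ = s⁻¹ := by rw [h2, one_mul]
    rw [hw]; exact gen_inv_mem hn hs
  · rw [h, one_mul]; exact hs

end Gens

section CSdef
variable (hn : 3 ≤ n)

/-- the set of permutations agreeing with `g` on all positions `≥ m`. -/
def CS (g : Perm (Fin n)) (m : ℕ) : Set (Perm (Fin n)) :=
  {v | ∀ j : Fin n, m ≤ (j : ℕ) → v j = g j}

lemma self_mem_CS (g : Perm (Fin n)) (m : ℕ) : g ∈ CS g m := fun _ _ => rfl

lemma CS_eq_of_mem {g u : Perm (Fin n)} {m : ℕ} (h : u ∈ CS g m) : CS g m = CS u m := by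
  ext v
  exact ⟨fun hv j hj => (hv j hj).trans (h j hj).symm,
    fun hv j hj => (hv j hj).trans (h j hj)⟩

lemma CS_mono {g : Perm (Fin n)} {m m' : ℕ} (h : m ≤ m') : CS g m ⊆ CS g m' :=
  fun _ hv j hj => hv j (le_trans h hj)

lemma mul_mem_CS {g v x : Perm (Fin n)} {m : ℕ} (hv : v ∈ CS g m)
    (hx : x ∈ CS 1 m) : v * x ∈ CS g m := fun j hj => by
  rw [Perm.mul_apply, show x j = j from (hx j hj).trans (Perm.one_apply j), hv j hj]

lemma CS_small {x : Perm (Fin n)} {m : ℕ} (hx : x ∈ CS 1 m) (j : Fin n)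
    (hj : (j : ℕ) < m) : ((x j : ℕ)) < m := by
  by_contra h
  push_neg at h
  have := hx (x j) h
  rw [Perm.one_apply] at this
  have := x.injective this
  omega

lemma inv_mul_mem_CS {g u v : Perm (Fin n)} {m : ℕ} (hu : u ∈ CS g m) (hv : v ∈ CS g m) :
    u⁻¹ * v ∈ CS 1 m := fun j hj => by
  rw [Perm.mul_apply, Perm.one_apply, (hv j hj).trans (hu j hj).symm, (show u⁻¹ (u j) = j from u.symm_apply_apply j)]

end CSdef

section Classify
variable (hn : 3 ≤ n)

lemma perm_eq3 {x y : Perm (Fin n)} (hx : x ∈ CS 1 3) (hy : y ∈ CS 1 3)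
    (h0 : x (I0 hn) = y (I0 hn)) (h1 : x (I1 hn) = y (I1 hn))
    (h2 : x (I2 hn) = y (I2 hn)) : x = y := by
  ext j
  rcases lt_or_ge (j : ℕ) 3 with hj | hj
  · rcases eq_tri hn j hj with rfl | rfl | rfl <;> simp [h0, h1, h2]
  · rw [(hx j hj).trans (Perm.one_apply j), (hy j hj).trans (Perm.one_apply j)]

lemma one_CS3 : (1 : Perm (Fin n)) ∈ CS 1 3 := fun _ _ => rfl
lemma one_0 : (1 : Perm (Fin n)) (I0 hn) = I0 hn := rfl
lemma one_1 : (1 : Perm (Fin n)) (I1 hn) = I1 hn := rfl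
lemma one_2 : (1 : Perm (Fin n)) (I2 hn) = I2 hn := rfl

lemma C_CS3 : C hn ∈ CS 1 3 := fun j hj => by
  rw [C_hi hn j hj, Perm.one_apply]
lemma T_CS3 : T hn ∈ CS 1 3 := fun j hj => by
  rw [T_hi hn j (by omega), Perm.one_apply]
lemma CC_CS3 : C hn * C hn ∈ CS 1 3 :=
  mul_mem_CS (C_CS3 hn) (C_CS3 hn)
lemma TC_CS3 : T hn * C hn ∈ CS 1 3 :=
  mul_mem_CS (T_CS3 hn) (C_CS3 hn)
lemma CT_CS3 : C hn * T hn ∈ CS 1 3 :=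
  mul_mem_CS (C_CS3 hn) (T_CS3 hn)

lemma CC_0 : (C hn * C hn) (I0 hn) = I2 hn := by rw [Perm.mul_apply, C_0, C_1]
lemma CC_1 : (C hn * C hn) (I1 hn) = I0 hn := by rw [Perm.mul_apply, C_1, C_2]
lemma CC_2 : (C hn * C hn) (I2 hn) = I1 hn := by rw [Perm.mul_apply, C_2, C_0]
lemma TC_0 : (T hn * C hn) (I0 hn) = I0 hn := by rw [Perm.mul_apply, C_0, T_1]
lemma TC_1 : (T hn * C hn) (I1 hn) = I2 hn := by rw [Perm.mul_apply, C_1, T_2]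
lemma TC_2 : (T hn * C hn) (I2 hn) = I1 hn := by rw [Perm.mul_apply, C_2, T_0]
lemma CT_0 : (C hn * T hn) (I0 hn) = I2 hn := by rw [Perm.mul_apply, T_0, C_1]
lemma CT_1 : (C hn * T hn) (I1 hn) = I1 hn := by rw [Perm.mul_apply, T_1, C_0]
lemma CT_2 : (C hn * T hn) (I2 hn) = I0 hn := by rw [Perm.mul_apply, T_2, C_2]

lemma sign_CC : Perm.sign (C hn * C hn) = 1 := by rw [map_mul, sign_C]; decide
lemma sign_TC : Perm.sign (T hn * C hn) = -1 := by rw [map_mul, sign_T, sign_C]; decide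
lemma sign_CT : Perm.sign (C hn * T hn) = -1 := by rw [map_mul, sign_T, sign_C]; decide

lemma mem_E {x : Perm (Fin n)} (hx : x ∈ CS 1 3) :
    x = 1 ∨ x = C hn ∨ x = C hn * C hn ∨ x = T hn ∨ x = T hn * C hn ∨ x = C hn * T hn := by
  have s0 := CS_small hx (I0 hn) (by simp)
  have s1 := CS_small hx (I1 hn) (by simp)
  have s2 := CS_small hx (I2 hn) (by simp)
  have h0 := eq_tri hn (x (I0 hn)) s0
  have h1 := eq_tri hn (x (I1 hn)) s1
  have h2 := eq_tri hn (x (I2 hn)) s2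
  rcases h0 with h0 | h0 | h0 <;> rcases h1 with h1 | h1 | h1 <;> rcases h2 with h2 | h2 | h2
  · exact absurd (x.injective (h0.trans h1.symm)) (by simp [Fin.ext_iff])
  · exact absurd (x.injective (h0.trans h1.symm)) (by simp [Fin.ext_iff])
  · exact absurd (x.injective (h0.trans h1.symm)) (by simp [Fin.ext_iff])
  · exact absurd (x.injective (h0.trans h2.symm)) (by simp [Fin.ext_iff])
  · exact absurd (x.injective (h1.trans h2.symm)) (by simp [Fin.ext_iff])
  · exact Or.inl (perm_eq3 hn hx (one_CS3 (n := n)) (h0.trans (one_0 hn).symm) (h1.trans (one_1 hn).symm) (h2.trans (one_2 hn).symm))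
  · exact absurd (x.injective (h0.trans h2.symm)) (by simp [Fin.ext_iff])
  · exact Or.inr (Or.inr (Or.inr (Or.inr (Or.inl (perm_eq3 hn hx (TC_CS3 hn) (h0.trans (TC_0 hn).symm) (h1.trans (TC_1 hn).symm) (h2.trans (TC_2 hn).symm))))))
  · exact absurd (x.injective (h1.trans h2.symm)) (by simp [Fin.ext_iff])
  · exact absurd (x.injective (h1.trans h2.symm)) (by simp [Fin.ext_iff])
  · exact absurd (x.injective (h0.trans h2.symm)) (by simp [Fin.ext_iff])
  · exact Or.inr (Or.inr (Or.inr (Or.inl (perm_eq3 hn hx (T_CS3 hn) (h0.trans (T_0 hn).symm) (h1.trans (T_1 hn).symm) (h2.trans (T_2 hn).symm)))))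
  · exact absurd (x.injective (h0.trans h1.symm)) (by simp [Fin.ext_iff])
  · exact absurd (x.injective (h0.trans h1.symm)) (by simp [Fin.ext_iff])
  · exact absurd (x.injective (h0.trans h1.symm)) (by simp [Fin.ext_iff])
  · exact Or.inr (Or.inl (perm_eq3 hn hx (C_CS3 hn) (h0.trans (C_0 hn).symm) (h1.trans (C_1 hn).symm) (h2.trans (C_2 hn).symm)))
  · exact absurd (x.injective (h0.trans h2.symm)) (by simp [Fin.ext_iff])
  · exact absurd (x.injective (h1.trans h2.symm)) (by simp [Fin.ext_iff])
  · exact absurd (x.injective (h1.trans h2.symm)) (by simp [Fin.ext_iff])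
  · exact Or.inr (Or.inr (Or.inl (perm_eq3 hn hx (CC_CS3 hn) (h0.trans (CC_0 hn).symm) (h1.trans (CC_1 hn).symm) (h2.trans (CC_2 hn).symm))))
  · exact absurd (x.injective (h0.trans h2.symm)) (by simp [Fin.ext_iff])
  · exact Or.inr (Or.inr (Or.inr (Or.inr (Or.inr (perm_eq3 hn hx (CT_CS3 hn) (h0.trans (CT_0 hn).symm) (h1.trans (CT_1 hn).symm) (h2.trans (CT_2 hn).symm))))))
  · exact absurd (x.injective (h1.trans h2.symm)) (by simp [Fin.ext_iff])
  · exact absurd (x.injective (h0.trans h2.symm)) (by simp [Fin.ext_iff])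
  · exact absurd (x.injective (h0.trans h1.symm)) (by simp [Fin.ext_iff])
  · exact absurd (x.injective (h0.trans h1.symm)) (by simp [Fin.ext_iff])
  · exact absurd (x.injective (h0.trans h1.symm)) (by simp [Fin.ext_iff])
end Classify
section Reach
universe u
variable {V : Type u}

/-- reachability within a vertex set `S` -/
def RIn (G : SimpleGraph V) (S : Set V) (a b : V) : Prop :=
  Relation.ReflTransGen (fun x y => x ∈ S ∧ y ∈ S ∧ G.Adj x y) a b

lemma RIn.refl {G : SimpleGraph V} {S : Set V} {a : V} : RIn G S a a :=
  Relation.ReflTransGen.refl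

lemma RIn.single {G : SimpleGraph V} {S : Set V} {a b : V} (ha : a ∈ S) (hb : b ∈ S)
    (h : G.Adj a b) : RIn G S a b :=
  Relation.ReflTransGen.single ⟨ha, hb, h⟩

lemma RIn.trans {G : SimpleGraph V} {S : Set V} {a b c : V} (h1 : RIn G S a b)
    (h2 : RIn G S b c) : RIn G S a c :=
  Relation.ReflTransGen.trans h1 h2

lemma RIn.symm {G : SimpleGraph V} {S : Set V} {a b : V} (h : RIn G S a b) : RIn G S b a :=
  (@Relation.ReflTransGen.symmetric _ _ ⟨fun _ _ hxy => ⟨hxy.2.1, hxy.1, hxy.2.2.symm⟩⟩).symm _ _ h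

lemma RIn.mono {G : SimpleGraph V} {S S' : Set V} (hS : S ⊆ S') {a b : V}
    (h : RIn G S a b) : RIn G S' a b :=
  Relation.ReflTransGen.mono (p := fun x y => x ∈ S' ∧ y ∈ S' ∧ G.Adj x y) (fun _ _ hxy => ⟨hS hxy.1, hS hxy.2.1, hxy.2.2⟩) _ _ h

lemma RIn.reachable {G : SimpleGraph V} {S : Set V} {a b : V} (h : RIn G S a b)
    (ha : a ∈ S) : ∀ (hb : b ∈ S), (G.induce S).Reachable ⟨a, ha⟩ ⟨b, hb⟩ := by
  induction h with
  | refl => exact fun _ => SimpleGraph.Reachable.refl _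
  | tail _ hstep ih =>
      intro hb
      exact (ih hstep.1).trans (SimpleGraph.Adj.reachable (by exact hstep.2.2))

end Reach

section Base
variable (hn : 3 ≤ n)

lemma sign_B {b : Perm (Fin n)} (hb : b ∈ ({1, C hn, C hn * C hn} : Set (Perm (Fin n)))) :
    Perm.sign b = 1 := by
  rcases hb with rfl | rfl | rfl
  · exact map_one _
  · exact sign_C hn
  · exact sign_CC hn

lemma B_CS3 {b : Perm (Fin n)} (hb : b ∈ ({1, C hn, C hn * C hn} : Set (Perm (Fin n)))) :
    b ∈ CS 1 3 := by
  rcases hb with rfl | rfl | rfl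
  · exact one_CS3
  · exact C_CS3 hn
  · exact CC_CS3 hn

lemma ncard_B : ({1, C hn, C hn * C hn} : Set (Perm (Fin n))).ncard = 3 := by
  rw [Set.ncard_insert_of_notMem, Set.ncard_insert_of_notMem, Set.ncard_singleton]
  · simp only [Set.mem_singleton_iff]
    intro h
    exact C_ne_one hn (mul_left_cancel (a := C hn) (by rw [mul_one, ← h]))
  · simp only [Set.mem_insert_iff, Set.mem_singleton_iff]
    push_neg
    exact ⟨(C_ne_one hn).symm, fun h => Csq_ne_one hn h.symm⟩

lemma Pm3 (g : Perm (Fin n)) (F : Set (Perm (Fin n))) (hF : F.ncard ≤ 2) :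
    ∀ u ∈ CS g 3 \ F, ∀ v ∈ CS g 3 \ F,
      RIn (godan n hn) (CS g 3 \ F) u v := by
  classical
  intro u hu v hv
  obtain ⟨huC, huF⟩ := hu
  obtain ⟨hvC, hvF⟩ := hv
  set GG := godan n hn with hGG
  set S := CS g 3 \ F with hSdef
  have hCSu : CS g 3 = CS u 3 := CS_eq_of_mem huC
  have memS : ∀ y : Perm (Fin n), y ∈ CS 1 3 → u * y ∉ F → u * y ∈ S := by
    intro y hy hyF
    refine ⟨?_, hyF⟩
    rw [hCSu]
    exact mul_mem_CS (self_mem_CS u 3) hy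
  have step : ∀ w s : Perm (Fin n), w ∈ S → w * s ∈ S → s ∈ godanGens n hn →
      RIn GG S w (w * s) := fun w s hw hws hs => RIn.single hw hws (adj_mul hn hs w)
  have even_case : ∀ w y : Perm (Fin n), w ∈ S → w * y ∈ S → y ∈ CS 1 3 →
      Perm.sign y = 1 → RIn GG S w (w * y) := by
    intro w y hw hwy hyCS hysign
    rcases mem_E hn hyCS with rfl | rfl | rfl | rfl | rfl | rfl
    · rw [mul_one]; exact RIn.refl
    · exact step _ _ hw hwy (C_mem hn)
    · exact step _ _ hw hwy (CC_mem hn)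
    · rw [sign_T hn] at hysign; exact absurd hysign (by decide)
    · rw [map_mul, sign_T hn, sign_C hn] at hysign; exact absurd hysign (by decide)
    · rw [map_mul, sign_T hn, sign_C hn] at hysign; exact absurd hysign (by decide)
  have hx : u⁻¹ * v ∈ CS 1 3 := inv_mul_mem_CS huC hvC
  have hux : u * (u⁻¹ * v) = v := mul_inv_cancel_left u v
  rcases Int.units_eq_one_or (Perm.sign (u⁻¹ * v)) with hs | hs
  · have := even_case u (u⁻¹ * v) ⟨huC, huF⟩ (by rw [hux]; exact ⟨hvC, hvF⟩) hx hs
    rwa [hux] at this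
  · -- odd case : route through the opposite triangle
    set B : Set (Perm (Fin n)) := {1, C hn, C hn * C hn} with hB
    have hgood : ∃ b ∈ B, u * b ∉ F ∧ u * b * T hn ∉ F := by
      by_contra hcon
      push_neg at hcon
      have hχ : Set.InjOn (fun b => if u * b ∈ F then u * b else u * b * T hn) B := by
        intro b hb b' hb' heq
        simp only at heq
        split_ifs at heq with h1 h2 h2
        · exact mul_left_cancel heq
        · exfalso
          have hbb : b = b' * T hn := by
            have := heq
            rw [mul_assoc] at this
            exact mul_left_cancel this
          have : Perm.sign b = Perm.sign (b' * T hn) := by rw [hbb]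
          rw [map_mul, sign_B hn hb', sign_T hn, one_mul, sign_B hn hb] at this
          exact absurd this (by decide)
        · exfalso
          have hbb : b' = b * T hn := by
            have := heq.symm
            rw [mul_assoc] at this
            exact mul_left_cancel this
          have : Perm.sign b' = Perm.sign (b * T hn) := by rw [hbb]
          rw [map_mul, sign_B hn hb, sign_T hn, one_mul, sign_B hn hb'] at this
          exact absurd this (by decide)
        · rw [mul_assoc, mul_assoc] at heq
          have h5 : b * T hn = b' * T hn := mul_left_cancel heq
          exact mul_right_cancel h5
      have himg : (fun b => if u * b ∈ F then u * b else u * b * T hn) '' B ⊆ F := by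
        rintro - ⟨b, hb, rfl⟩
        simp only
        split_ifs with h1
        · exact h1
        · exact hcon b hb h1
      have h3 : (3 : ℕ) ≤ F.ncard := by
        calc (3:ℕ) = B.ncard := (ncard_B hn).symm
          _ = ((fun b => if u * b ∈ F then u * b else u * b * T hn) '' B).ncard :=
              (Set.ncard_image_of_injOn hχ).symm
          _ ≤ F.ncard := Set.ncard_le_ncard himg F.toFinite
      omega
    obtain ⟨b, hbB, hb1, hb2⟩ := hgood
    have hbCS := B_CS3 hn hbB
    have hbsign := sign_B hn hbB
    have hw1S : u * b ∈ S := memS b hbCS hb1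
    have hw2CS : b * T hn ∈ CS 1 3 := mul_mem_CS hbCS (T_CS3 hn)
    have hw2S : u * b * T hn ∈ S := by
      rw [mul_assoc]
      exact memS _ hw2CS hb2
    have p1 : RIn GG S u (u * b) := even_case u b ⟨huC, huF⟩ hw1S hbCS hbsign
    have p2 : RIn GG S (u * b) (u * b * T hn) := step _ _ hw1S hw2S (T_mem hn)
    have p3 : RIn GG S (u * b * T hn) v := by
      have hyCS : (u * b * T hn)⁻¹ * v ∈ CS 1 3 :=
        inv_mul_mem_CS (hCSu ▸ hw2S.1) hvC
      have hysign : Perm.sign ((u * b * T hn)⁻¹ * v) = 1 := by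
        have hyeq : (u * b * T hn)⁻¹ * v = (T hn)⁻¹ * b⁻¹ * (u⁻¹ * v) := by
          group
        rw [hyeq, map_mul, map_mul, map_inv, map_inv, sign_T hn, hbsign, hs]
        decide
      have := even_case (u * b * T hn) _ hw2S
        (by rw [mul_inv_cancel_left]; exact ⟨hvC, hvF⟩) hyCS hysign
      rwa [mul_inv_cancel_left] at this
    exact (p1.trans p2).trans p3
end Base

section Count
variable (hn : 3 ≤ n)

lemma swap_CS {M : ℕ} {a b : Fin n} (ha : (a : ℕ) < M) (hb : (b : ℕ) < M) :
    Equiv.swap a b ∈ CS 1 M := fun j hj => by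
  rw [Perm.one_apply]
  exact Equiv.swap_apply_of_ne_of_ne (by rintro rfl; omega) (by rintro rfl; omega)

lemma ncard_hi (a : ℕ) (ha : a ≤ n) : ({j : Fin n | a ≤ (j : ℕ)}).ncard = n - a := by
  have h1 : {j : Fin n | a ≤ (j : ℕ)} =
      (fun i : Fin (n - a) => (⟨a + (i : ℕ), by omega⟩ : Fin n)) '' Set.univ := by
    ext j
    simp only [Set.mem_setOf_eq, Set.mem_image, Set.mem_univ, true_and]
    constructor
    · intro hj
      exact ⟨⟨(j : ℕ) - a, by omega⟩, by simp [Fin.ext_iff]; omega⟩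
    · rintro ⟨i, rfl⟩
      simp
  rw [h1, Set.ncard_image_of_injective _ (fun i i' h => by
    have := congrArg Fin.val h
    simp only at this
    exact Fin.ext (by omega)), Set.ncard_univ, Nat.card_eq_fintype_card, Fintype.card_fin]

lemma ncard_lo (a : ℕ) (ha : a ≤ n) : ({j : Fin n | (j : ℕ) < a}).ncard = a := by
  have hc : {j : Fin n | (j : ℕ) < a} = ({j : Fin n | a ≤ (j : ℕ)})ᶜ := by
    ext j
    simp [not_le]
  rw [hc]
  have h2 := Set.ncard_add_ncard_compl {j : Fin n | a ≤ (j : ℕ)}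
  rw [ncard_hi a ha, Nat.card_eq_fintype_card, Fintype.card_fin] at h2
  omega

lemma ncard_prod {α β : Type u} (s : Set α) (t : Set β) :
    (s ×ˢ t).ncard = s.ncard * t.ncard := by
  rw [← Nat.card_coe_set_eq, ← Nat.card_coe_set_eq, ← Nat.card_coe_set_eq,
    Nat.card_congr (Equiv.Set.prod s t), Nat.card_prod]

lemma ncard_univ_bool : (Set.univ : Set Bool).ncard = 2 := by
  rw [Set.ncard_univ, Nat.card_eq_fintype_card]
  rfl

lemma mul_lb {a b : ℕ} (ha : 1 ≤ a) (hb : 1 ≤ b) : a + b ≤ a * b + 1 := by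
  nlinarith

end Count

section Step
variable (hn : 3 ≤ n)

lemma copy_lb {w : Perm (Fin n)} {m : ℕ} (hm : m ≤ n) (hm0 : 0 < m) :
    m ≤ (CS w m).ncard := by
  have h0 : 0 < n := by omega
  have hmaps : ∀ j ∈ {j : Fin n | (j : ℕ) < m},
      w * Equiv.swap ⟨0, h0⟩ j ∈ CS w m := by
    intro j hj
    exact mul_mem_CS (self_mem_CS w m) (swap_CS hm0 hj)
  have hinj : Set.InjOn (fun j : Fin n => w * Equiv.swap ⟨0, h0⟩ j)
      {j : Fin n | (j : ℕ) < m} := by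
    intro j hj j' hj' heq
    simp only at heq
    have h1 : Equiv.swap (⟨0, h0⟩ : Fin n) j = Equiv.swap ⟨0, h0⟩ j' := mul_left_cancel heq
    have h2 := congrFun (congrArg (fun e => e.toFun) h1) ⟨0, h0⟩
    simpa [Equiv.swap_apply_left] using h2
  calc m = ({j : Fin n | (j : ℕ) < m}).ncard := (ncard_lo m hm).symm
    _ ≤ (CS w m).ncard := Set.ncard_le_ncard_of_injOn _ hmaps hinj (Set.toFinite _)


lemma Pstep (m : ℕ) (hm3 : 3 ≤ m) (hmn : m + 1 ≤ n)
    (IH : ∀ g : Perm (Fin n), ∀ F : Set (Perm (Fin n)), F.ncard ≤ m - 1 →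
      ∀ u ∈ CS g m \ F, ∀ v ∈ CS g m \ F, RIn (godan n hn) (CS g m \ F) u v) :
    ∀ g : Perm (Fin n), ∀ F : Set (Perm (Fin n)), F.ncard ≤ m →
      ∀ u ∈ CS g (m + 1) \ F, ∀ v ∈ CS g (m + 1) \ F,
        RIn (godan n hn) (CS g (m + 1) \ F) u v := by
  classical
  intro g F hF u hu v hv
  set GG := godan n hn with hGG
  set S := CS g (m + 1) \ F with hSdef
  have hmn' : m < n := by omega
  set Im : Fin n := ⟨m, hmn'⟩ with hIm
  set sc : Perm (Fin n) := SG (n := n) (p := m) hm3 hmn' with hscdef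
  -- basic facts about the cross generator
  have hsc_CS : sc ∈ CS 1 (m + 1) := fun j hj => by
    rw [hscdef, Perm.one_apply]
    exact SG_hi hm3 hmn' j (by omega)
  have cross_CS : ∀ w : Perm (Fin n), w ∈ CS g (m + 1) → w * sc ∈ CS g (m + 1) :=
    fun w hw => mul_mem_CS hw hsc_CS
  have cross_m : ∀ w : Perm (Fin n), (w * sc) Im = w (I2 hn) := fun w => by
    rw [Perm.mul_apply, hscdef, hIm, SG_p hn hm3 hmn']
  have cross_2 : ∀ w : Perm (Fin n), (w * sc) (I2 hn) = w Im := fun w => by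
    rw [Perm.mul_apply, hscdef, hIm, SG_2 hn hm3 hmn']
  have cross_invol : ∀ w : Perm (Fin n), w * sc * sc = w := fun w => by
    rw [mul_assoc, hscdef, SG_sq hm3 hmn', mul_one]
  have hadj_cross : ∀ w : Perm (Fin n), GG.Adj w (w * sc) := fun w =>
    adj_mul hn (SG_mem hn hm3 hmn') w
  have hIm2 : Im ≠ I2 hn := by
    rw [hIm]
    intro h
    have := congrArg Fin.val h
    simp only [I2_val] at this
    omega
  -- copies
  have copy_sub : ∀ w ∈ CS g (m + 1), CS w m ⊆ CS g (m + 1) := by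
    intro w hw x hx j hj
    exact (hx j (by omega)).trans (hw j hj)
  have copy_val : ∀ w x : Perm (Fin n), x ∈ CS w m → x Im = w Im := fun w x hx =>
    hx Im (le_refl m)
  have mem_copy : ∀ w ∈ CS g (m + 1), ∀ x ∈ CS g (m + 1), (x ∈ CS w m ↔ x Im = w Im) := by
    intro w hw x hx
    refine ⟨copy_val w x, fun hval j hj => ?_⟩
    rcases eq_or_lt_of_le hj with heq | hlt
    · have : j = Im := Fin.ext heq.symm
      rw [this]; exact hval
    · exact (hx j hlt).trans (hw j hlt).symm
  -- reach everything inside a good copy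
  have claimA : ∀ w, w ∈ CS g (m + 1) → w ∉ F → (F ∩ CS w m).ncard ≤ m - 1 →
      ∀ x ∈ CS w m, x ∉ F → RIn GG S w x := by
    intro w hw hwF hgood x hx hxF
    have h0 := IH w (F ∩ CS w m) hgood w
      ⟨self_mem_CS w m, fun hc => hwF hc.1⟩ x ⟨hx, fun hc => hxF hc.1⟩
    refine RIn.mono ?_ h0
    rintro y ⟨hy1, hy2⟩
    exact ⟨copy_sub w hw hy1, fun hyF => hy2 ⟨hyF, hy1⟩⟩
  -- escape from a bad copy
  have escape : ∀ w, w ∈ S → ∃ w', w' ∈ S ∧ (F ∩ CS w' m).ncard ≤ m - 1 ∧ RIn GG S w w' := by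
    intro w hw
    by_cases hgood : (F ∩ CS w m).ncard ≤ m - 1
    · exact ⟨w, hw, hgood, RIn.refl⟩
    · push_neg at hgood
      have hFsub : F ⊆ CS w m := by
        have h1 : F.ncard ≤ (F ∩ CS w m).ncard := by omega
        have h2 := Set.eq_of_subset_of_ncard_le
          (Set.inter_subset_left (s := F) (t := CS w m)) h1 F.toFinite
        rw [← h2]
        exact Set.inter_subset_right
      have hwsF : w * sc ∉ F := by
        intro hcF
        have hmem : w * sc ∈ CS w m := hFsub hcF
        have hval := copy_val w (w * sc) hmem
        rw [cross_m w] at hval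
        exact hIm2 ((w.injective hval).symm)
      have hwsC : w * sc ∈ CS g (m + 1) := cross_CS w hw.1
      refine ⟨w * sc, ⟨hwsC, hwsF⟩, ?_, ?_⟩
      · have hdisj : F ∩ CS (w * sc) m = ∅ := by
          ext f
          simp only [Set.mem_inter_iff, Set.mem_empty_iff_false, iff_false, not_and]
          intro hfF hfC
          have h1 := copy_val _ _ hfC
          have h2 := copy_val _ _ (hFsub hfF)
          rw [cross_m w] at h1
          exact hIm2 ((w.injective (h1.symm.trans h2)).symm)
        rw [hdisj, Set.ncard_empty]
        omega
      · exact RIn.single hw ⟨hwsC, hwsF⟩ (hadj_cross w)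
  obtain ⟨u', hu'S, hu'good, hu'reach⟩ := escape u hu
  obtain ⟨v', hv'S, hv'good, hv'reach⟩ := escape v hv
  suffices hmain : RIn GG S u' v' by
    exact (hu'reach.trans hmain).trans hv'reach.symm
  -- the set of copy values reached from u'
  set R : Set (Fin n) :=
    {k | ∃ x, x ∈ S ∧ (F ∩ CS x m).ncard ≤ m - 1 ∧ x Im = k ∧ RIn GG S u' x} with hR
  have hfinish : v' Im ∈ R → RIn GG S u' v' := by
    rintro ⟨x, hxS, hxgood, hxval, hxreach⟩
    have hv'x : v' ∈ CS x m := (mem_copy x hxS.1 v' hv'S.1).mpr hxval.symm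
    exact hxreach.trans (claimA x hxS.1 hxS.2 hxgood v' hv'x hv'S.2)
  refine hfinish ?_
  by_contra hnotR
  -- good copies with a survivor
  set A : Set (Fin n) :=
    {k | ∃ x, x ∈ S ∧ (F ∩ CS x m).ncard ≤ m - 1 ∧ x Im = k} with hA
  set K1 : Set (Fin n) := A ∩ R with hK1
  set K2 : Set (Fin n) := A \ R with hK2
  have hu'K1 : u' Im ∈ K1 :=
    ⟨⟨u', hu'S, hu'good, rfl⟩, ⟨u', hu'S, hu'good, rfl, RIn.refl⟩⟩
  have hv'K2 : v' Im ∈ K2 := ⟨⟨v', hv'S, hv'good, rfl⟩, hnotR⟩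
  -- same copy value + goodness propagate
  have same_copy : ∀ x y : Perm (Fin n), x ∈ CS g (m + 1) → y ∈ CS g (m + 1) →
      x Im = y Im → CS x m = CS y m := by
    intro x y hx hy hval
    exact CS_eq_of_mem ((mem_copy x hx y hy).mpr hval.symm)
  -- every cross edge from K1 to K2 is killed
  have claim_killed : ∀ w : Perm (Fin n), w ∈ CS g (m + 1) → w Im ∈ K1 →
      w (I2 hn) ∈ K2 → w ∈ F ∨ w * sc ∈ F := by
    intro w hwC hwK1 hwK2
    by_contra hc
    push_neg at hc
    obtain ⟨hwF, hwscF⟩ := hc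
    obtain ⟨x, hxS, hxgood, hxval, hxreach⟩ := hwK1.2
    have hwx : w ∈ CS x m := (mem_copy x hxS.1 w hwC).mpr hxval.symm
    have hwreach : RIn GG S u' w :=
      hxreach.trans (claimA x hxS.1 hxS.2 hxgood w hwx hwF)
    have hwsC : w * sc ∈ CS g (m + 1) := cross_CS w hwC
    have hwsS : w * sc ∈ S := ⟨hwsC, hwscF⟩
    have hreach2 : RIn GG S u' (w * sc) :=
      hwreach.trans (RIn.single ⟨hwC, hwF⟩ hwsS (hadj_cross w))
    obtain ⟨⟨y, hyS, hygood, hyval⟩, hnR2⟩ := hwK2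
    have hcseq : CS (w * sc) m = CS y m :=
      same_copy _ _ hwsC hyS.1 (by rw [cross_m w, hyval])
    exact hnR2 ⟨w * sc, hwsS, by rw [hcseq]; exact hygood, cross_m w, hreach2⟩
  -- two distinct elements of each cross class
  have hpair2 : ∀ k l : Fin n, k ∈ K1 → l ∈ K2 →
      ∃ wp : Perm (Fin n) × Perm (Fin n),
        (wp.1 ∈ CS g (m + 1) ∧ wp.1 Im = k ∧ wp.1 (I2 hn) = l) ∧
        (wp.2 ∈ CS g (m + 1) ∧ wp.2 Im = k ∧ wp.2 (I2 hn) = l) ∧ wp.1 ≠ wp.2 := by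
    intro k l hk hl
    obtain ⟨x, hxS, -, hxval⟩ := hk.1
    obtain ⟨y, hyS, -, hyval⟩ := hl.1
    have hkl : k ≠ l := by
      rintro rfl
      exact hl.2 (hk.2)
    -- position of value l in x
    set pos : Fin n := x⁻¹ l with hpos
    have hxpos : x pos = l := by rw [hpos, (show x (x⁻¹ l) = l from x.apply_symm_apply l)]
    have hposlt : (pos : ℕ) ≤ m := by
      by_contra hgt
      push_neg at hgt
      have h1 : x pos = g pos := hxS.1 pos (by omega)
      have h2 : y pos = g pos := hyS.1 pos (by omega)
      have h3 : y pos = l := by rw [h2, ← h1, hxpos]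
      have h4 : y Im = y pos := by rw [hyval, h3]
      have h5 : Im = pos := y.injective h4
      have h6 : m = (pos : ℕ) := congrArg Fin.val h5
      omega
    have hposne : pos ≠ Im := by
      intro h
      rw [h] at hxpos
      rw [hxval] at hxpos
      exact hkl hxpos
    have hposm : (pos : ℕ) ≠ m := fun h => hposne (Fin.ext h)
    -- w1 : move value l to position 2
    set w1 : Perm (Fin n) := x * Equiv.swap (I2 hn) pos with hw1
    have hw1C : w1 ∈ CS g (m + 1) :=
      mul_mem_CS hxS.1 (swap_CS (show (2:ℕ) < m + 1 by omega) (by omega))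
    have hw1m : w1 Im = k := by
      rw [hw1, Perm.mul_apply, Equiv.swap_apply_of_ne_of_ne hIm2 (Ne.symm hposne), hxval]
    have hw12 : w1 (I2 hn) = l := by
      rw [hw1, Perm.mul_apply, Equiv.swap_apply_left, hxpos]
    set w2 : Perm (Fin n) := w1 * Equiv.swap (I0 hn) (I1 hn) with hw2
    have hw2C : w2 ∈ CS g (m + 1) :=
      mul_mem_CS hw1C (swap_CS (show (0:ℕ) < m + 1 by omega) (show (1:ℕ) < m + 1 by omega))
    have hw2m : w2 Im = k := by
      rw [hw2, Perm.mul_apply,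
        Equiv.swap_apply_of_ne_of_ne
          (fne2 Im (I0 hn) (show (m:ℕ) ≠ 0 by omega))
          (fne2 Im (I1 hn) (show (m:ℕ) ≠ 1 by omega)), hw1m]
    have hw22 : w2 (I2 hn) = l := by
      rw [hw2, Perm.mul_apply,
        Equiv.swap_apply_of_ne_of_ne
          (fne2 (I2 hn) (I0 hn) (show (2:ℕ) ≠ 0 by omega))
          (fne2 (I2 hn) (I1 hn) (show (2:ℕ) ≠ 1 by omega)), hw12]
    have hne12 : w1 ≠ w2 := by
      intro h
      have h0 : w1 (I0 hn) = w2 (I0 hn) := by rw [h]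
      simp only [hw2, Perm.mul_apply, Equiv.swap_apply_left] at h0
      have := w1.injective h0
      exact (by simp [Fin.ext_iff] : (I0 hn : Fin n) ≠ I1 hn) this
    exact ⟨(w1, w2), ⟨hw1C, hw1m, hw12⟩, ⟨hw2C, hw2m, hw22⟩, hne12⟩
  -- choice function producing two cross elements per pair of values
  choose! W hW1 hW2 hWne using hpair2
  set f : Fin n × Fin n × Bool → Perm (Fin n) := fun t =>
    if t.2.2 then (W t.1 t.2.1).1 else (W t.1 t.2.1).2 with hf
  set φ : Perm (Fin n) → Perm (Fin n) := fun w => if w ∈ F then w else w * sc with hφ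
  have hfP : ∀ t : Fin n × Fin n × Bool, t.1 ∈ K1 → t.2.1 ∈ K2 →
      f t ∈ CS g (m + 1) ∧ f t Im = t.1 ∧ f t (I2 hn) = t.2.1 := by
    intro t h1 h2
    rcases ht : t.2.2 with _ | _
    · rw [hf]; simp only [ht, if_false]; exact hW2 t.1 t.2.1 h1 h2
    · rw [hf]; simp only [ht, if_true]; exact hW1 t.1 t.2.1 h1 h2
  have hK1K2 : ∀ k : Fin n, k ∈ K1 → k ∈ K2 → False := fun k h1 h2 => h2.2 h1.2
  set D : Set (Fin n × Fin n × Bool) := K1 ×ˢ K2 ×ˢ Set.univ with hD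
  have hmemD : ∀ t : Fin n × Fin n × Bool, t ∈ D → t.1 ∈ K1 ∧ t.2.1 ∈ K2 := by
    intro t ht
    rw [hD, Set.mem_prod] at ht
    exact ⟨ht.1, ht.2.1⟩
  have himg : ∀ t ∈ D, (φ ∘ f) t ∈ F := by
    intro t ht
    obtain ⟨h1, h2⟩ := hmemD t ht
    obtain ⟨hfC, hfm, hf2⟩ := hfP t h1 h2
    have hkill := claim_killed (f t) hfC (by rw [hfm]; exact h1) (by rw [hf2]; exact h2)
    simp only [Function.comp_apply, hφ]
    split_ifs with hFt
    · exact hFt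
    · exact hkill.resolve_left hFt
  have hinj : Set.InjOn (φ ∘ f) D := by
    intro t ht t' ht' heq
    obtain ⟨h1, h2⟩ := hmemD t ht
    obtain ⟨h1', h2'⟩ := hmemD t' ht'
    obtain ⟨hfC, hfm, hf2⟩ := hfP t h1 h2
    obtain ⟨hfC', hfm', hf2'⟩ := hfP t' h1' h2'
    simp only [Function.comp_apply, hφ] at heq
    have heqw : f t = f t' := by
      split_ifs at heq with hA hB hB
      · exact heq
      · exfalso
        have : f t Im = (f t' * sc) Im := by rw [heq]
        rw [hfm, cross_m, hf2'] at this
        exact hK1K2 t.1 h1 (this ▸ h2')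
      · exfalso
        have : (f t * sc) Im = f t' Im := by rw [heq]
        rw [hfm', cross_m, hf2] at this
        exact hK1K2 t'.1 h1' (this ▸ h2)
      · have := congrArg (fun z => z * sc) heq
        simpa only [cross_invol] using this
    have hfst : t.1 = t'.1 := by rw [← hfm, ← hfm', heqw]
    have hsnd : t.2.1 = t'.2.1 := by rw [← hf2, ← hf2', heqw]
    have hbool : t.2.2 = t'.2.2 := by
      by_contra hbne
      rcases hb : t.2.2 with _ | _ <;> rcases hb' : t'.2.2 with _ | _ <;>
        rw [hb, hb'] at hbne <;> try exact hbne rfl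
      · -- t.2.2 = false, t'.2.2 = true
        rw [hf] at heqw
        simp only [hb, hb', if_false, if_true] at heqw
        rw [hfst, hsnd] at heqw
        exact hWne t'.1 t'.2.1 h1' h2' heqw.symm
      · rw [hf] at heqw
        simp only [hb, hb', if_false, if_true] at heqw
        rw [hfst, hsnd] at heqw
        exact hWne t'.1 t'.2.1 h1' h2' heqw
    exact Prod.ext hfst (Prod.ext hsnd hbool)
  have hcard : D.ncard ≤ F.ncard :=
    Set.ncard_le_ncard_of_injOn (φ ∘ f) himg hinj F.toFinite
  rw [hD, ncard_prod, ncard_prod, ncard_univ_bool] at hcard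
  -- sizes of K1, K2, A
  have hK1pos : 1 ≤ K1.ncard := (Set.ncard_pos (Set.toFinite _)).mpr ⟨_, hu'K1⟩
  have hK2pos : 1 ≤ K2.ncard := (Set.ncard_pos (Set.toFinite _)).mpr ⟨_, hv'K2⟩
  have hdisjK : Disjoint K1 K2 := Set.disjoint_left.mpr (fun k hk1 hk2 => hK1K2 k hk1 hk2)
  have hsum : K1.ncard + K2.ncard = A.ncard := by
    rw [← Set.ncard_union_eq hdisjK (Set.toFinite _) (Set.toFinite _), hK1, hK2,
      Set.inter_union_diff]
  -- A has at least m elements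
  set Vals : Set (Fin n) := {k | ∃ w, w ∈ CS g (m + 1) ∧ w Im = k} with hVals
  have hAVals : A ⊆ Vals := by
    rintro k ⟨x, hxS, -, hxval⟩
    exact ⟨x, hxS.1, hxval⟩
  have hVcard : Vals.ncard = m + 1 := by
    have hVeq : Vals = (g '' {j : Fin n | m + 1 ≤ (j : ℕ)})ᶜ := by
      ext k
      constructor
      · rintro ⟨w, hw, hwval⟩ ⟨j, hj, hgj⟩
        have h2 : w Im = w j := by rw [hwval, ← hgj, hw j hj]
        have h3 : Im = j := w.injective h2
        have h4 : m = (j : ℕ) := congrArg Fin.val h3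
        simp only [Set.mem_setOf_eq] at hj
        omega
      · intro hk
        have hpos : ((g⁻¹ k : Fin n) : ℕ) < m + 1 := by
          by_contra hge
          push_neg at hge
          exact hk ⟨g⁻¹ k, hge, g.apply_symm_apply k⟩
        refine ⟨g * Equiv.swap Im (g⁻¹ k),
          mul_mem_CS (self_mem_CS g (m + 1)) (swap_CS (show (Im:ℕ) < m + 1 from Nat.lt_succ_self m) hpos), ?_⟩
        rw [Perm.mul_apply, Equiv.swap_apply_left, (show g (g⁻¹ k) = k from g.apply_symm_apply k)]
    rw [hVeq]
    have h2 := Set.ncard_add_ncard_compl (g '' {j : Fin n | m + 1 ≤ (j : ℕ)})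
    rw [Set.ncard_image_of_injective _ g.injective, ncard_hi (m + 1) hmn,
      Nat.card_eq_fintype_card, Fintype.card_fin] at h2
    omega
  have hbadsub : Set.Subsingleton (Vals \ A) := by
    intro k1 hk1 k2 hk2
    by_contra hne
    have hchunk : ∀ k ∈ Vals \ A, ∃ Dk : Set (Perm (Fin n)),
        Dk ⊆ F ∧ m ≤ Dk.ncard ∧ ∀ x ∈ Dk, x Im = k := by
      rintro k ⟨⟨w, hwC, hwval⟩, hkA⟩
      by_cases hsur : ∃ x, x ∈ S ∧ x Im = k
      · obtain ⟨x, hxS, hxval⟩ := hsur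
        have hbad : ¬(F ∩ CS x m).ncard ≤ m - 1 := fun hgood => hkA ⟨x, hxS, hgood, hxval⟩
        refine ⟨F ∩ CS x m, Set.inter_subset_left, by omega, ?_⟩
        intro z hz
        rw [copy_val x z hz.2, hxval]
      · push_neg at hsur
        have hsub : CS w m ⊆ F := by
          intro z hz
          by_contra hzF
          exact (hsur z ⟨copy_sub w hwC hz, hzF⟩) (by rw [copy_val w z hz, hwval])
        refine ⟨CS w m, hsub, copy_lb (by omega) (by omega), ?_⟩
        intro z hz
        rw [copy_val w z hz, hwval]
    obtain ⟨D1, hD1F, hD1c, hD1v⟩ := hchunk k1 hk1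
    obtain ⟨D2, hD2F, hD2c, hD2v⟩ := hchunk k2 hk2
    have hdisj12 : Disjoint D1 D2 := Set.disjoint_left.mpr
      (fun x hx1 hx2 => hne (by rw [← hD1v x hx1, hD2v x hx2]))
    have hle : D1.ncard + D2.ncard ≤ F.ncard := by
      rw [← Set.ncard_union_eq hdisj12 (Set.toFinite _) (Set.toFinite _)]
      exact Set.ncard_le_ncard (Set.union_subset hD1F hD2F) F.toFinite
    omega
  have hVA : (Vals \ A).ncard ≤ 1 := by
    rcases Set.Subsingleton.eq_empty_or_singleton hbadsub with h | ⟨x, h⟩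
    · rw [h]; simp
    · rw [h, Set.ncard_singleton]
  have hAcard : m ≤ A.ncard := by
    have h1 : Vals \ (Vals \ A) = A := by
      rw [Set.diff_diff_right, Set.diff_self, Set.empty_union]
      exact Set.inter_eq_self_of_subset_right hAVals
    have h2 := Set.ncard_diff (Set.diff_subset : Vals \ A ⊆ Vals) (Set.toFinite _)
    rw [h1] at h2
    omega
  -- final arithmetic contradiction
  have hprod : K1.ncard + K2.ncard ≤ K1.ncard * K2.ncard + 1 := mul_lb hK1pos hK2pos
  have hassoc : K1.ncard * (K2.ncard * 2) = K1.ncard * K2.ncard * 2 := by ring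
  rw [hassoc] at hcard
  have hx2 : m - 1 ≤ K1.ncard * K2.ncard := by omega
  omega

end Step

section Assemble
variable (hn : 3 ≤ n)

lemma Pall : ∀ m : ℕ, 3 ≤ m → m ≤ n →
    ∀ g : Perm (Fin n), ∀ F : Set (Perm (Fin n)), F.ncard ≤ m - 1 →
      ∀ u ∈ CS g m \ F, ∀ v ∈ CS g m \ F, RIn (godan n hn) (CS g m \ F) u v := by
  intro m hm3
  induction m, hm3 using Nat.le_induction with
  | base => intro _ g F hF; exact Pm3 hn g F hF
  | succ m hm3 ih =>
      intro hmn
      exact Pstep hn m hm3 hmn (ih (by omega))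

lemma CS_top : CS (1 : Perm (Fin n)) n = Set.univ :=
  Set.eq_univ_of_forall (fun v j hj => absurd j.isLt (by omega))

lemma main_conn (U : Set (Perm (Fin n))) (hU : U.ncard ≤ n - 1) :
    ∀ u ∉ U, ∀ v ∉ U, RIn (godan n hn) Uᶜ u v := by
  intro u hu v hv
  have h := Pall hn n (by omega) (le_refl n) 1 U hU u
    (by rw [CS_top (n := n)]; exact ⟨trivial, hu⟩) v (by rw [CS_top (n := n)]; exact ⟨trivial, hv⟩)
  rw [CS_top (n := n)] at h
  rw [Set.compl_eq_univ_diff]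
  exact h

lemma succ_le_factorial : ∀ m : ℕ, 3 ≤ m → m + 1 ≤ Nat.factorial m := by
  intro m hm
  induction m, hm using Nat.le_induction with
  | base => decide
  | succ m hm ih =>
      rw [Nat.factorial_succ]
      nlinarith [ih, Nat.one_le_iff_ne_zero.mpr (Nat.factorial_ne_zero m)]

lemma card_perm_lb (hn : 3 ≤ n) : n + 1 ≤ Nat.card (Perm (Fin n)) := by
  rw [Nat.card_eq_fintype_card, Fintype.card_perm, Fintype.card_fin]
  exact succ_le_factorial n hn

lemma compl_big (hn : 3 ≤ n) (U : Set (Perm (Fin n))) (hU : U.ncard ≤ n - 1) : 2 ≤ Uᶜ.ncard := by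
  have h1 := Set.ncard_add_ncard_compl U (Set.toFinite _) (Set.toFinite _)
  have h2 := card_perm_lb hn
  omega

lemma main_connected (U : Set (Perm (Fin n))) (hU : U.ncard ≤ n - 1) :
    ((godan n hn).induce Uᶜ).Connected ∧ ¬ Uᶜ.Subsingleton := by
  have hbig := compl_big hn U hU
  have h2 : ∃ a ∈ Uᶜ, ∃ b ∈ Uᶜ, a ≠ b := by
    rcases (Set.one_lt_ncard_iff (Set.toFinite Uᶜ)).mp (by omega) with ⟨a, b, ha, hb, hab⟩
    exact ⟨a, ha, b, hb, hab⟩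
  obtain ⟨a, ha, b, hb, hab⟩ := h2
  constructor
  · rw [SimpleGraph.connected_iff]
    refine ⟨?_, ⟨⟨a, ha⟩⟩⟩
    rintro ⟨x, hx⟩ ⟨y, hy⟩
    exact (main_conn hn U hU x hx y hy).reachable hx hy
  · intro hsub
    exact hab (hsub ha hb)

lemma reach_cases {V : Type u} {G : SimpleGraph V} {a b : V} (h : G.Reachable a b) :
    a = b ∨ ∃ c, G.Adj a c := by
  obtain ⟨w⟩ := h
  cases w with
  | nil => exact Or.inl rfl
  | cons hadj p => exact Or.inr ⟨_, hadj⟩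

/-- classification of the generators -/
lemma gen_kinds {x : Perm (Fin n)} (hx : x ∈ godanGens n hn) :
    x = T hn ∨ x = C hn ∨ x = (C hn)⁻¹ ∨
      ∃ p : ℕ, ∃ h3 : 3 ≤ p, ∃ hp : p < n, x = SG h3 hp := by
  rcases hx with h | h | h
  · rw [Set.mem_singleton_iff] at h
    exact Or.inl h
  · rcases h with h | h
    · exact Or.inr (Or.inl h)
    · rw [Set.mem_singleton_iff] at h
      exact Or.inr (Or.inr (Or.inl h))
  · obtain ⟨i, h1, h2, rfl⟩ := h
    exact Or.inr (Or.inr (Or.inr ⟨i - 1, by omega, by omega, rfl⟩))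

lemma Cinv_2 : (C hn)⁻¹ (I2 hn) = I1 hn := by
  have := congrArg (fun z => (C hn)⁻¹ z) (C_1 hn)
  simpa using this.symm

lemma Cinv_1 : (C hn)⁻¹ (I1 hn) = I0 hn := by
  have := congrArg (fun z => (C hn)⁻¹ z) (C_0 hn)
  simpa using this.symm

lemma gens_ncard : (godanGens n hn).ncard = n := by
  have hinj : Set.InjOn (fun x : Perm (Fin n) => x (I2 hn)) (godanGens n hn) := by
    intro x hx y hy hxy
    simp only at hxy
    have e1 := T_2 hn
    have e2 := C_2 hn
    have e3 := Cinv_2 hn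
    rcases gen_kinds hn hx with rfl | rfl | rfl | ⟨p, h3, hp, rfl⟩ <;>
      rcases gen_kinds hn hy with rfl | rfl | rfl | ⟨q, h4, hq, rfl⟩
    · rfl
    · rw [e1, e2] at hxy; exact absurd (congrArg Fin.val hxy) (by simp)
    · rw [e1, e3] at hxy; exact absurd (congrArg Fin.val hxy) (by simp)
    · rw [e1, SG_2 hn h4 hq] at hxy
      have := congrArg Fin.val hxy
      simp only [I2_val] at this
      omega
    · rw [e1, e2] at hxy; exact absurd (congrArg Fin.val hxy) (by simp)
    · rfl
    · rw [e2, e3] at hxy; exact absurd (congrArg Fin.val hxy) (by simp)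
    · rw [e2, SG_2 hn h4 hq] at hxy
      have := congrArg Fin.val hxy
      simp only [I0_val] at this
      omega
    · rw [e1, e3] at hxy; exact absurd (congrArg Fin.val hxy) (by simp)
    · rw [e2, e3] at hxy; exact absurd (congrArg Fin.val hxy) (by simp)
    · rfl
    · rw [e3, SG_2 hn h4 hq] at hxy
      have := congrArg Fin.val hxy
      simp only [I1_val] at this
      omega
    · rw [e1, SG_2 hn h3 hp] at hxy
      have := congrArg Fin.val hxy
      simp only [I2_val] at this
      omega
    · rw [e2, SG_2 hn h3 hp] at hxy
      have := congrArg Fin.val hxy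
      simp only [I0_val] at this
      omega
    · rw [e3, SG_2 hn h3 hp] at hxy
      have := congrArg Fin.val hxy
      simp only [I1_val] at this
      omega
    · rw [SG_2 hn h3 hp, SG_2 hn h4 hq] at hxy
      have hpq : p = q := congrArg Fin.val hxy
      subst hpq
      rfl
  have himg : (fun x : Perm (Fin n) => x (I2 hn)) '' (godanGens n hn) = Set.univ := by
    apply Set.eq_univ_of_forall
    intro k
    rcases lt_or_ge (k : ℕ) 3 with hk | hk
    · rcases eq_tri hn k hk with rfl | rfl | rfl
      · exact ⟨C hn, C_mem hn, C_2 hn⟩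
      · exact ⟨(C hn)⁻¹, Cinv_mem hn, Cinv_2 hn⟩
      · exact ⟨T hn, T_mem hn, T_2 hn⟩
    · refine ⟨SG (p := (k : ℕ)) hk k.isLt, SG_mem hn hk k.isLt, ?_⟩
      show SG hk k.isLt (I2 hn) = k
      rw [SG_2 hn hk k.isLt]
  have := Set.ncard_image_of_injOn hinj
  rw [himg, Set.ncard_univ, Nat.card_eq_fintype_card, Fintype.card_fin] at this
  exact this.symm

lemma one_not_gen : (1 : Perm (Fin n)) ∉ godanGens n hn :=
  fun h => gen_ne_one hn h rfl

lemma w0_not_gen : Equiv.swap (I0 hn) (I2 hn) ∉ godanGens n hn := by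
  intro h
  rcases gen_kinds hn h with heq | heq | heq | ⟨p, h3, hp, heq⟩
  · have := congrArg (fun z => Fin.val (z (I0 hn))) heq
    simp only [Equiv.swap_apply_left, T_0 hn] at this
    exact absurd this (by simp)
  · have := congrArg (fun z => Fin.val (z (I0 hn))) heq
    simp only [Equiv.swap_apply_left, C_0 hn] at this
    exact absurd this (by simp)
  · have := congrArg (fun z => Fin.val (z (I1 hn))) heq
    have h1 : Equiv.swap (I0 hn) (I2 hn) (I1 hn) = I1 hn :=
      Equiv.swap_apply_of_ne_of_ne (fne2 (I1 hn) (I0 hn) (by simp))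
        (fne2 (I1 hn) (I2 hn) (by simp))
    simp only [h1, Cinv_1 hn] at this
    exact absurd this (by simp)
  · have := congrArg (fun z => Fin.val (z (I0 hn))) heq
    simp only [Equiv.swap_apply_left, SG_0 hn h3 hp] at this
    exact absurd this (by simp)

lemma w0_ne_one : Equiv.swap (I0 hn) (I2 hn) ≠ (1 : Perm (Fin n)) := by
  intro h
  have := congrArg (fun z => Fin.val (z (I0 hn))) h
  simp only [Equiv.swap_apply_left, Perm.one_apply] at this
  exact absurd this (by simp)

lemma godan_not_conn :
    ¬ ((godan n hn).induce (godanGens n hn)ᶜ).Connected := by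
  intro hconn
  set U := godanGens n hn with hU
  have h1 : (1 : Perm (Fin n)) ∈ Uᶜ := one_not_gen hn
  have hw0 : Equiv.swap (I0 hn) (I2 hn) ∈ Uᶜ := w0_not_gen hn
  have hreach := hconn.preconnected ⟨1, h1⟩ ⟨Equiv.swap (I0 hn) (I2 hn), hw0⟩
  rcases reach_cases hreach with heq | ⟨c, hadj⟩
  · exact w0_ne_one hn (congrArg Subtype.val heq).symm
  · have hadj' : (godan n hn).Adj 1 c.val := hadj
    exact c.prop (adj_one hn hadj')

end Assemble

end Godan

/-- For every integer `n ≥ 3`, `κ(EA_n) = n`. -/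
theorem vconn_godan (n : ℕ) (hn : 3 ≤ n) :
    vconn (godan n hn) = n := by
  classical
  set SS : Set ℕ := {k : ℕ | ∃ U : Set (Equiv.Perm (Fin n)), U.Finite ∧ U.ncard = k ∧
      (¬ ((godan n hn).induce Uᶜ).Connected ∨ Uᶜ.Subsingleton)} with hSS
  have hmem : n ∈ SS :=
    ⟨godanGens n hn, Set.toFinite _, Godan.gens_ncard hn,
      Or.inl (Godan.godan_not_conn hn)⟩
  have hlb : ∀ k ∈ SS, n ≤ k := by
    rintro k ⟨U, hUf, hUcard, hdis⟩
    by_contra hlt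
    push_neg at hlt
    have hU : U.ncard ≤ n - 1 := by omega
    obtain ⟨hconn, hnsub⟩ := Godan.main_connected hn U hU
    rcases hdis with h | h
    · exact h hconn
    · exact hnsub h
  have : vconn (godan n hn) = sInf SS := rfl
  rw [this]
  exact le_antisymm (Nat.sInf_le hmem) (le_csInf ⟨n, hmem⟩ hlb)
end
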